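/- Let Δ and Δ' be two semicomplete weakly distance-regular digraphs of girth 2 with the same intersection numbers. Then the Cartesian product Δ□Δ' is a weakly distance-regular digraph. -/

import Mathlib

namespace Paper

/-- A digraph: a set of vertices together with a set of arcs (ordered pairs of
distinct vertices). -/
structure Digraph (V : Type*) where
  Adj : V → V → Prop
  loopless : ∀ v : V, ¬ Adj v v

variable {V V' : Type*}

namespace Digraph

/-- There is a directed walk of length `n` from `x` to `y`. -/
def HasPath (G : Digraph V) (x y : V) (n : ℕ) : Prop :=
  ∃ f : ℕ → V, f 0 = x ∧ f n = y ∧ ∀ k < n, G.Adj (f k) (f (k + 1))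

/-- The distance `∂(x,y)`: the length of a shortest directed path from `x` to `y`. -/
noncomputable def dist (G : Digraph V) (x y : V) : ℕ :=
  sInf {n | G.HasPath x y n}

/-- The two-way distance `∂̃(x,y) = (∂(x,y), ∂(y,x))`. -/
noncomputable def tdist (G : Digraph V) (x y : V) : ℕ × ℕ :=
  (G.dist x y, G.dist y x)

/-- The two-way distance set `∂̃(Γ)`. -/
def tdSet (G : Digraph V) : Set (ℕ × ℕ) :=
  {p | ∃ x y : V, G.tdist x y = p}

def StronglyConnected (G : Digraph V) : Prop :=
  ∀ x y : V, ∃ n, G.HasPath x y n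

/-- `P_{ĩ,j̃}(x,y)`: the set of `z` with `∂̃(x,z) = ĩ` and `∂̃(z,y) = j̃`. -/
def P (G : Digraph V) (i j : ℕ × ℕ) (x y : V) : Set V :=
  {z | G.tdist x z = i ∧ G.tdist z y = j}

open Classical in
/-- The intersection number `p^{h̃}_{ĩ,j̃}`, defined using an arbitrarily chosen
pair at two-way distance `h̃` (and `0` if there is no such pair). -/
noncomputable def p (G : Digraph V) (h i j : ℕ × ℕ) : ℕ :=
  if hh : ∃ xy : V × V, G.tdist xy.1 xy.2 = h then
    Nat.card (G.P i j hh.choose.1 hh.choose.2)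
  else 0

/-- A weakly distance-regular digraph: strongly connected, and
`|P_{ĩ,j̃}(x,y)|` depends only on `∂̃(x,y)`, `ĩ` and `j̃`. -/
def IsWDR (G : Digraph V) : Prop :=
  G.StronglyConnected ∧
    ∀ (i j : ℕ × ℕ) (x y : V), Nat.card (G.P i j x y) = G.p (G.tdist x y) i j

/-- Commutativity: `p^{h̃}_{ĩ,j̃} = p^{h̃}_{j̃,ĩ}` for all `h̃,ĩ,j̃ ∈ ∂̃(Γ)`. -/
def IsCommutative (G : Digraph V) : Prop :=
  ∀ h i j : ℕ × ℕ, h ∈ G.tdSet → i ∈ G.tdSet → j ∈ G.tdSet → G.p h i j = G.p h j i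

/-- `Γ` is an undirected graph, i.e. its arc set is symmetric. -/
def IsUndirected (G : Digraph V) : Prop :=
  ∀ x y : V, G.Adj x y → G.Adj y x

def IsSemicomplete (G : Digraph V) : Prop :=
  ∀ x y : V, x ≠ y → (G.Adj x y ∨ G.Adj y x)

/-- `Γ` is a complete (undirected) graph. -/
def IsCompleteDigraph (G : Digraph V) : Prop :=
  ∀ x y : V, x ≠ y → (G.Adj x y ∧ G.Adj y x)

/-- The underlying graph of a digraph. -/
def underlying (G : Digraph V) : SimpleGraph V where
  Adj x y := G.Adj x y ∨ G.Adj y x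
  symm := ⟨fun _ _ h => h.symm⟩
  loopless := ⟨fun x h => h.elim (G.loopless x) (G.loopless x)⟩

/-- The diameter: the maximum value of the distance function. -/
noncomputable def diameter (G : Digraph V) : ℕ :=
  sSup {n | ∃ x y : V, G.dist x y = n}

/-- The girth: the length of a shortest circuit. -/
noncomputable def girth (G : Digraph V) : ℕ :=
  sInf {n | 0 < n ∧ ∃ x : V, G.HasPath x x n}

/-- Number of out-neighbours `d⁺(x)`. -/
noncomputable def outDeg (G : Digraph V) (x : V) : ℕ := Nat.card {y | G.Adj x y}

/-- Number of in-neighbours `d⁻(x)`. -/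
noncomputable def inDeg (G : Digraph V) (x : V) : ℕ := Nat.card {y | G.Adj y x}

def IsIsomorphicTo (G : Digraph V) (G' : Digraph V') : Prop :=
  ∃ e : V ≃ V', ∀ x y : V, G.Adj x y ↔ G'.Adj (e x) (e y)

/-- The Cartesian product of two digraphs. -/
def box (G : Digraph V) (G' : Digraph V') : Digraph (V × V') where
  Adj x y := (x.1 = y.1 ∧ G'.Adj x.2 y.2) ∨ (G.Adj x.1 y.1 ∧ x.2 = y.2)
  loopless := fun v h => h.elim (fun h' => G'.loopless v.2 h'.2) (fun h' => G.loopless v.1 h'.1)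

/-- Two digraphs have the same intersection numbers. -/
def SameIntersectionNumbers (G : Digraph V) (G' : Digraph V') : Prop :=
  G.tdSet = G'.tdSet ∧
    ∀ h i j : ℕ × ℕ, h ∈ G.tdSet → i ∈ G.tdSet → j ∈ G.tdSet → G.p h i j = G'.p h i j

/-- Induced subdigraph on a set of vertices. -/
def induce (G : Digraph V) (s : Set V) : Digraph s where
  Adj x y := G.Adj x.1 y.1
  loopless := fun v h => G.loopless v.1 h

end Digraph

/-- The Cartesian product of a family of digraphs. -/
def piBox {ι : Type*} {W : ι → Type*} (G : ∀ i, Digraph (W i)) : Digraph (∀ i, W i) where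
  Adj x y := ∃ i, (G i).Adj (x i) (y i) ∧ ∀ j, j ≠ i → x j = y j
  loopless := by
    rintro v ⟨i, hi, -⟩
    exact (G i).loopless _ hi

/-- The Cayley digraph `Cay(A,S)` of an additive group (for `S ⊆ A ∖ {0}`). -/
def Cay (A : Type*) [AddGroup A] (S : Set A) : Digraph A where
  Adj x y := x ≠ y ∧ y - x ∈ S
  loopless := fun _ h => h.1 rfl

/-- The Cayley graph of an additive group with respect to a symmetric connection set. -/
def cayleyGraph (A : Type*) [AddGroup A] (S : Set A) : SimpleGraph A where
  Adj x y := x ≠ y ∧ (y - x ∈ S ∨ x - y ∈ S)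
  symm := ⟨fun _ _ h => ⟨h.1.symm, h.2.symm⟩⟩
  loopless := ⟨fun _ h => h.1 rfl⟩

/-- The Hamming graph `H(ι, S)`: vertices are tuples, adjacent iff they differ in
exactly one coordinate. -/
def hammingGraph (ι : Type*) (S : Type*) : SimpleGraph (ι → S) where
  Adj x y := ∃ i, x i ≠ y i ∧ ∀ j, j ≠ i → x j = y j
  symm := by
    refine ⟨?_⟩
    rintro x y ⟨i, h1, h2⟩
    exact ⟨i, h1.symm, fun j hj => (h2 j hj).symm⟩
  loopless := by
    refine ⟨?_⟩
    rintro x ⟨i, h1, -⟩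
    exact h1 rfl

/-- The folded `n`-cube: vertices are `(n-1)`-tuples over `ℤ₂`, adjacent iff they
differ in exactly one coordinate or in all `n-1` coordinates. -/
def foldedCube (n : ℕ) : SimpleGraph (Fin (n - 1) → ZMod 2) where
  Adj x y := (∃ i, x i ≠ y i ∧ ∀ j, j ≠ i → x j = y j) ∨ (x ≠ y ∧ ∀ j, x j ≠ y j)
  symm := by
    refine ⟨?_⟩
    rintro x y (⟨i, h1, h2⟩ | ⟨h1, h2⟩)
    · exact Or.inl ⟨i, h1.symm, fun j hj => (h2 j hj).symm⟩
    · exact Or.inr ⟨h1.symm, fun j => (h2 j).symm⟩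
  loopless := by
    refine ⟨?_⟩
    rintro x (⟨i, h1, -⟩ | ⟨h1, -⟩)
    · exact h1 rfl
    · exact h1 rfl

/-- The Cartesian product of a family of simple graphs. -/
def piBoxGraph {ι : Type*} {W : ι → Type*} (G : ∀ i, SimpleGraph (W i)) :
    SimpleGraph (∀ i, W i) where
  Adj x y := ∃ i, (G i).Adj (x i) (y i) ∧ ∀ j, j ≠ i → x j = y j
  symm := by
    refine ⟨?_⟩
    rintro x y ⟨i, h1, h2⟩
    exact ⟨i, SimpleGraph.Adj.symm h1, fun j hj => (h2 j hj).symm⟩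
  loopless := by
    refine ⟨?_⟩
    rintro x ⟨i, h1, -⟩
    exact (G i).loopless.irrefl _ h1

/-- The Shrikhande graph `Cay(ℤ₄ × ℤ₄, {±(1,0), ±(0,1), ±(1,1)})`. -/
def shrikhande : SimpleGraph (ZMod 4 × ZMod 4) :=
  cayleyGraph (ZMod 4 × ZMod 4) {(1, 0), (-1, 0), (0, 1), (0, -1), (1, 1), (-1, -1)}

/-- The Doob graph `G(d₁, d₂)`: the Cartesian product of `d₁` copies of the
Shrikhande graph with the Hamming graph `H(d₂, 4)`. -/
def doobGraph (d₁ d₂ : ℕ) :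
    SimpleGraph ((Fin d₁ → ZMod 4 × ZMod 4) × (Fin d₂ → ZMod 4)) :=
  (piBoxGraph fun _ : Fin d₁ => shrikhande).boxProd (hammingGraph (Fin d₂) (ZMod 4))

/-- `c_i(x,y)`: the number of neighbours of `y` at distance `i - 1` from `x`. -/
noncomputable def cNum (G : SimpleGraph V) (i : ℕ) (x y : V) : ℕ :=
  Nat.card {z : V | G.Adj y z ∧ G.dist x z = i - 1}

/-- `a_i(x,y)`: the number of neighbours of `y` at distance `i` from `x`. -/
noncomputable def aNum (G : SimpleGraph V) (i : ℕ) (x y : V) : ℕ :=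
  Nat.card {z : V | G.Adj y z ∧ G.dist x z = i}

/-- `b_i(x,y)`: the number of neighbours of `y` at distance `i + 1` from `x`. -/
noncomputable def bNum (G : SimpleGraph V) (i : ℕ) (x y : V) : ℕ :=
  Nat.card {z : V | G.Adj y z ∧ G.dist x z = i + 1}

/-- A distance-regular graph. -/
def IsDRG (G : SimpleGraph V) : Prop :=
  G.Connected ∧
    ∀ (i : ℕ) (x y x' y' : V), G.dist x y = i → G.dist x' y' = i →
      cNum G i x y = cNum G i x' y' ∧ bNum G i x y = bNum G i x' y'

/-- A distance-transitive graph. -/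
def IsDistanceTransitive (G : SimpleGraph V) : Prop :=
  G.Connected ∧
    ∀ x y x' y' : V, G.dist x y = G.dist x' y' → ∃ σ : G ≃g G, σ x = x' ∧ σ y = y'

/-- The vertex set of `Γ_i(α)`: all tuples obtained from `α` by inserting an
arbitrary element of `S` in the `i`-th coordinate. -/
def lineSet {n : ℕ} {S : Type*} (i : Fin (n + 1)) (α : Fin n → S) : Set (Fin (n + 1) → S) :=
  Set.range fun b : S => i.insertNth b α

/-- The induced subdigraph `Γ_i(α)`. -/
def Digraph.line {n : ℕ} {S : Type*} (Γ : Digraph (Fin (n + 1) → S)) (i : Fin (n + 1))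
    (α : Fin n → S) : Digraph (lineSet i α) :=
  Γ.induce (lineSet i α)

/-- Pad a tuple of length `m` with the entry `o` to a tuple of length `d`. -/
def pad {S : Type*} (o : S) (d m : ℕ) (α : Fin m → S) : Fin d → S :=
  fun j => if h : j.1 < m then α ⟨j.1, h⟩ else o

/-- The digraph `Γ^{[m]}` on `S^m`: `(α,β)` is an arc iff the padded tuples form
an arc of `Γ`. -/
def Digraph.trunc {S : Type*} {d : ℕ} (Γ : Digraph (Fin d → S)) (o : S) (m : ℕ) :
    Digraph (Fin m → S) where
  Adj α β := Γ.Adj (pad o d m α) (pad o d m β)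
  loopless := fun _ h => Γ.loopless _ h

/-- The digraph `Γ^i` on `S`: `(a,b)` is an arc iff the tuples with `a` resp. `b`
in the `i`-th coordinate and `o` elsewhere form an arc of `Γ`. -/
def Digraph.coordDigraph {S : Type*} {d : ℕ} (Γ : Digraph (Fin d → S)) (o : S) (i : Fin d) :
    Digraph S where
  Adj a b := Γ.Adj (Function.update (fun _ => o) i a) (Function.update (fun _ => o) i b)
  loopless := fun _ h => Γ.loopless _ h

/-- The set `T = S^{m-1} × {(o,…,o)}` (as a subset of `S^{d-1}`, here `d = n+1`). -/
def Tset {n : ℕ} (S : Type*) (o : S) (m : ℕ) : Set (Fin n → S) :=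
  {α | ∀ j : Fin n, m - 1 ≤ j.1 → α j = o}

end Paper

namespace Paper
namespace Aux

open Paper Paper.Digraph Finset

variable {V V' : Type*}

lemma hasPath_refl (G : Digraph V) (x : V) : G.HasPath x x 0 :=
  ⟨fun _ => x, rfl, rfl, fun k hk => absurd hk (by omega)⟩

lemma hasPath_zero {G : Digraph V} {x y : V} (h : G.HasPath x y 0) : x = y := by
  obtain ⟨f, h0, h1, -⟩ := h; rw [← h0, ← h1]

lemma hasPath_one {G : Digraph V} {x y : V} (h : G.HasPath x y 1) : G.Adj x y := by
  obtain ⟨f, h0, h1, ha⟩ := h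
  have := ha 0 (by omega)
  rwa [h0, h1] at this

lemma adj_hasPath {G : Digraph V} {x y : V} (h : G.Adj x y) : G.HasPath x y 1 := by
  refine ⟨fun k => if k = 0 then x else y, by simp, by simp, ?_⟩
  intro k hk
  interval_cases k
  simpa using h

lemma hasPath_concat {G : Digraph V} {x y z : V} {a b : ℕ}
    (h1 : G.HasPath x y a) (h2 : G.HasPath y z b) : G.HasPath x z (a + b) := by
  obtain ⟨f, hf0, hfa, hfadj⟩ := h1
  obtain ⟨g, hg0, hgb, hgadj⟩ := h2
  refine ⟨fun k => if k < a then f k else g (k - a), ?_, ?_, ?_⟩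
  · by_cases h : 0 < a
    · simp [h, hf0]
    · have ha0 : a = 0 := by omega
      simp only [ha0]
      simp [hg0, ← hf0, ha0 ▸ hfa]
  · have : ¬ (a + b < a) := by omega
    simp [this, hgb]
  · intro k hk
    by_cases hka : k < a
    · have hfk : (if k < a then f k else g (k - a)) = f k := if_pos hka
      have hnext : (if k + 1 < a then f (k + 1) else g (k + 1 - a)) = f (k + 1) := by
        by_cases h2 : k + 1 < a
        · exact if_pos h2
        · have : k + 1 = a := by omega
          simp [h2, this, hg0, hfa]
      simp only [hfk, hnext]
      exact hfadj k hka
    · have h1 : ¬ (k < a) := hka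
      have h2 : ¬ (k + 1 < a) := by omega
      simp only [if_neg h1, if_neg h2]
      have : k + 1 - a = (k - a) + 1 := by omega
      rw [this]
      exact hgadj (k - a) (by omega)

lemma hasPath_cons {G : Digraph V} {x u y : V} {n : ℕ}
    (h : G.Adj x u) (hp : G.HasPath u y n) : G.HasPath x y (n + 1) := by
  have := hasPath_concat (adj_hasPath h) hp
  rwa [Nat.add_comm] at this

lemma dist_le {G : Digraph V} {x y : V} {n : ℕ} (h : G.HasPath x y n) : G.dist x y ≤ n :=
  Nat.sInf_le h

lemma hasPath_dist {G : Digraph V} (hsc : G.StronglyConnected) (x y : V) :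
    G.HasPath x y (G.dist x y) :=
  Nat.sInf_mem (hsc x y)

lemma dist_self (G : Digraph V) (x : V) : G.dist x x = 0 :=
  Nat.le_zero.mp (dist_le (hasPath_refl G x))

lemma tdist_self (G : Digraph V) (x : V) : G.tdist x x = (0, 0) := by
  simp [Digraph.tdist, dist_self]

lemma eq_of_dist_eq_zero {G : Digraph V} (hsc : G.StronglyConnected) {x y : V}
    (h : G.dist x y = 0) : x = y :=
  hasPath_zero (h ▸ hasPath_dist hsc x y)

lemma adj_of_dist_eq_one {G : Digraph V} (hsc : G.StronglyConnected) {x y : V}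
    (h : G.dist x y = 1) : G.Adj x y :=
  hasPath_one (h ▸ hasPath_dist hsc x y)

lemma dist_eq_one {G : Digraph V} (hsc : G.StronglyConnected) {x y : V}
    (h : G.Adj x y) : G.dist x y = 1 := by
  have hne : x ≠ y := fun he => G.loopless x (he ▸ h)
  have h1 : G.dist x y ≤ 1 := dist_le (adj_hasPath h)
  have h0 : G.dist x y ≠ 0 := fun h0 => hne (eq_of_dist_eq_zero hsc h0)
  omega

lemma adj_iff_dist_eq_one {G : Digraph V} (hsc : G.StronglyConnected) {x y : V} :
    G.Adj x y ↔ G.dist x y = 1 :=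
  ⟨dist_eq_one hsc, adj_of_dist_eq_one hsc⟩

lemma dist_le_two {G : Digraph V} {x z y : V} (h1 : G.Adj x z) (h2 : G.Adj z y) :
    G.dist x y ≤ 2 :=
  dist_le (hasPath_concat (adj_hasPath h1) (adj_hasPath h2))

lemma tdist_swap (G : Digraph V) (x y : V) : G.tdist y x = (G.tdist x y).swap := rfl

end Aux
end Paper

namespace Paper
namespace Aux2

open Paper Paper.Digraph Finset Paper.Aux

variable {V V' : Type*}

set_option maxRecDepth 8000 in
lemma nat_card_setOf [Fintype V] (q : V → Prop) [DecidablePred q] :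
    Nat.card {z | q z} = (Finset.univ.filter q).card := by
  rw [Nat.card_coe_set_eq, Set.ncard_eq_toFinset_card']
  simp [Set.toFinset_setOf]

/-- The size of the sphere `{z | tdist w z = h}` does not depend on `w`. -/
lemma card_sphere {G : Digraph V} (hwdr : G.IsWDR) (w : V) (h : ℕ × ℕ) :
    Nat.card {z | G.tdist w z = h} = G.p (0, 0) h h.swap := by
  have hset : {z | G.tdist w z = h} = G.P h h.swap w w := by
    ext z
    simp only [Set.mem_setOf_eq, Digraph.P]
    exact ⟨fun hz => ⟨hz, by rw [tdist_swap, hz]⟩, fun hz => hz.1⟩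
  rw [hset, hwdr.2 h h.swap w w, tdist_self]

/-- In a WDR digraph the in-degree is constant. -/
lemma indeg_const [Fintype V] [Nonempty V] {G : Digraph V} (hwdr : G.IsWDR) (u v : V) :
    Nat.card {z | G.Adj z u} = Nat.card {z | G.Adj z v} := by
  classical
  have hsc := hwdr.1
  obtain ⟨u0⟩ := ‹Nonempty V›
  set H : Finset (ℕ × ℕ) :=
    (Finset.univ.image (fun z => G.tdist u0 z)).filter (fun h => h.2 = 1) with hH
  suffices key : ∀ w : V, Nat.card {z | G.Adj z w} = ∑ h ∈ H, G.p (0, 0) h h.swap by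
    rw [key u, key v]
  intro w
  rw [nat_card_setOf]
  rw [Finset.card_eq_sum_card_fiberwise (f := fun z => G.tdist w z) (t := H) ?_]
  · refine Finset.sum_congr rfl fun h hh => ?_
    have hfil : Finset.filter (fun z => G.tdist w z = h) (Finset.univ.filter (fun z => G.Adj z w))
        = Finset.univ.filter (fun z => G.tdist w z = h) := by
      ext z
      simp only [Finset.mem_filter, Finset.mem_univ, true_and]
      refine ⟨fun hz => hz.2, fun hz => ⟨?_, hz⟩⟩
      have h2 : h.2 = 1 := (Finset.mem_filter.mp hh).2
      have : G.dist z w = 1 := by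
        have := congrArg Prod.snd hz
        simpa [Digraph.tdist, h2] using this
      exact adj_of_dist_eq_one hsc this
    rw [hfil, ← nat_card_setOf, card_sphere hwdr]
  · intro z hz
    have hadj : G.Adj z w := (Finset.mem_filter.mp hz).2
    rw [hH, Finset.mem_coe, Finset.mem_filter]
    constructor
    · -- tdist w z is realized from u0 as well
      have hcard : Nat.card {z' | G.tdist u0 z' = G.tdist w z} =
          Nat.card {z' | G.tdist w z' = G.tdist w z} := by
        rw [card_sphere hwdr, card_sphere hwdr]
      have hpos : 0 < Nat.card {z' | G.tdist w z' = G.tdist w z} :=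
        Nat.card_pos_iff.mpr ⟨⟨z, rfl⟩, Set.toFinite _⟩
      rw [← hcard] at hpos
      obtain ⟨⟨z', hz'⟩, -⟩ := Nat.card_pos_iff.mp hpos
      exact Finset.mem_image.mpr ⟨z', Finset.mem_univ _, hz'⟩
    · exact dist_eq_one hsc hadj

/-- The set of possible two-way distances in a finite semicomplete WDR digraph. -/
lemma tdist_classify [Fintype V] [Nonempty V] {G : Digraph V} (hsc2 : G.IsSemicomplete)
    (hwdr : G.IsWDR) (x y : V) :
    G.tdist x y = (0,0) ∨ G.tdist x y = (1,1) ∨ G.tdist x y = (1,2) ∨ G.tdist x y = (2,1) := by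
  have hsc := hwdr.1
  -- key: for any arc (u,v), dist v u ≤ 2
  have key : ∀ u v : V, G.Adj u v → G.dist v u ≤ 2 := by
    intro u v hadj
    by_contra h3
    push_neg at h3
    have hsub : insert u {z | G.Adj z u} ⊆ {z | G.Adj z v} := by
      rintro z (rfl | hz)
      · exact hadj
      · have hzv : z ≠ v := by
          rintro rfl
          exact absurd (dist_eq_one hsc hz) (by omega)
        rcases hsc2 z v hzv with h | h
        · exact h
        · exact absurd (dist_le_two h hz) (by omega)
    have hnm : u ∉ {z | G.Adj z u} := G.loopless u
    have hle : (insert u {z | G.Adj z u}).ncard ≤ {z | G.Adj z v}.ncard :=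
      Set.ncard_le_ncard hsub (Set.toFinite _)
    rw [Set.ncard_insert_of_notMem hnm (Set.toFinite _)] at hle
    have heq : Nat.card {z | G.Adj z u} = Nat.card {z | G.Adj z v} := indeg_const hwdr u v
    rw [Nat.card_coe_set_eq, Nat.card_coe_set_eq] at heq
    omega
  rcases eq_or_ne x y with rfl | hne
  · exact Or.inl (tdist_self G x)
  · have hd1 : G.dist x y ≠ 0 := fun h0 => hne (eq_of_dist_eq_zero hsc h0)
    have hd2 : G.dist y x ≠ 0 := fun h0 => hne.symm (eq_of_dist_eq_zero hsc h0)
    rcases hsc2 x y hne with h | h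
    · have e1 : G.dist x y = 1 := dist_eq_one hsc h
      have e2 : G.dist y x ≤ 2 := key x y h
      have : G.dist y x = 1 ∨ G.dist y x = 2 := by omega
      rcases this with e | e
      · exact Or.inr (Or.inl (by simp [Digraph.tdist, e1, e]))
      · exact Or.inr (Or.inr (Or.inl (by simp [Digraph.tdist, e1, e])))
    · have e1 : G.dist y x = 1 := dist_eq_one hsc h
      have e2 : G.dist x y ≤ 2 := key y x h
      have : G.dist x y = 1 ∨ G.dist x y = 2 := by omega
      rcases this with e | e
      · exact Or.inr (Or.inl (by simp [Digraph.tdist, e1, e]))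
      · exact Or.inr (Or.inr (Or.inr (by simp [Digraph.tdist, e1, e])))

end Aux2
end Paper

namespace Paper
namespace Aux3

open Paper Paper.Digraph Finset Paper.Aux Paper.Aux2

variable {V V' : Type*}

lemma box_hasPath_decomp {Δ : Digraph V} {Δ' : Digraph V'} :
    ∀ {n : ℕ} {s t : V × V'}, (Δ.box Δ').HasPath s t n →
      ∃ a b, a + b = n ∧ Δ.HasPath s.1 t.1 a ∧ Δ'.HasPath s.2 t.2 b := by
  intro n
  induction n with
  | zero =>
    intro s t h
    obtain rfl := hasPath_zero h
    exact ⟨0, 0, rfl, hasPath_refl _ _, hasPath_refl _ _⟩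
  | succ n ih =>
    intro s t h
    obtain ⟨f, h0, hn, ha⟩ := h
    have htail : (Δ.box Δ').HasPath (f 1) t n :=
      ⟨fun k => f (k + 1), rfl, by rw [← hn], fun k hk => ha (k + 1) (by omega)⟩
    obtain ⟨a, b, hab, p1, p2⟩ := ih htail
    have harc : (Δ.box Δ').Adj s (f 1) := by
      have := ha 0 (by omega)
      rwa [h0] at this
    rcases harc with ⟨he, hadj⟩ | ⟨hadj, he⟩
    · refine ⟨a, b + 1, by omega, by rwa [he], hasPath_cons hadj p2⟩
    · exact ⟨a + 1, b, by omega, hasPath_cons hadj p1, by rwa [he]⟩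

lemma box_hasPath_left {Δ : Digraph V} {Δ' : Digraph V'} {x y : V} {a : ℕ} (x' : V')
    (h : Δ.HasPath x y a) : (Δ.box Δ').HasPath (x, x') (y, x') a := by
  obtain ⟨f, h0, hn, ha⟩ := h
  exact ⟨fun k => (f k, x'), by simp [h0], by simp [hn], fun k hk => Or.inr ⟨ha k hk, rfl⟩⟩

lemma box_hasPath_right {Δ : Digraph V} {Δ' : Digraph V'} {x' y' : V'} {b : ℕ} (x : V)
    (h : Δ'.HasPath x' y' b) : (Δ.box Δ').HasPath (x, x') (x, y') b := by
  obtain ⟨f, h0, hn, ha⟩ := h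
  exact ⟨fun k => (x, f k), by simp [h0], by simp [hn], fun k hk => Or.inl ⟨rfl, ha k hk⟩⟩

lemma box_hasPath_comp {Δ : Digraph V} {Δ' : Digraph V'} {x y : V} {x' y' : V'} {a b : ℕ}
    (h : Δ.HasPath x y a) (h' : Δ'.HasPath x' y' b) :
    (Δ.box Δ').HasPath (x, x') (y, y') (a + b) :=
  hasPath_concat (box_hasPath_left x' h) (box_hasPath_right y h')

lemma box_sc {Δ : Digraph V} {Δ' : Digraph V'} (h : Δ.StronglyConnected)
    (h' : Δ'.StronglyConnected) : (Δ.box Δ').StronglyConnected := by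
  rintro ⟨x, x'⟩ ⟨y, y'⟩
  obtain ⟨a, ha⟩ := h x y
  obtain ⟨b, hb⟩ := h' x' y'
  exact ⟨a + b, box_hasPath_comp ha hb⟩

lemma box_dist {Δ : Digraph V} {Δ' : Digraph V'} (h : Δ.StronglyConnected)
    (h' : Δ'.StronglyConnected) (x y : V) (x' y' : V') :
    (Δ.box Δ').dist (x, x') (y, y') = Δ.dist x y + Δ'.dist x' y' := by
  refine le_antisymm (dist_le (box_hasPath_comp (hasPath_dist h x y) (hasPath_dist h' x' y'))) ?_
  obtain ⟨a, b, hab, p1, p2⟩ := box_hasPath_decomp (hasPath_dist (box_sc h h') (x, x') (y, y'))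
  have l1 : Δ.dist x y ≤ a := dist_le p1
  have l2 : Δ'.dist x' y' ≤ b := dist_le p2
  omega

lemma box_tdist {Δ : Digraph V} {Δ' : Digraph V'} (h : Δ.StronglyConnected)
    (h' : Δ'.StronglyConnected) (x y : V) (x' y' : V') :
    (Δ.box Δ').tdist (x, x') (y, y') = Δ.tdist x y + Δ'.tdist x' y' := by
  have e1 := box_dist h h' x y x' y'
  have e2 := box_dist h h' y x y' x'
  simp only [Digraph.tdist, Prod.mk_add_mk]
  rw [e1, e2]

end Aux3
end Paper

namespace Paper
namespace Aux4

open Paper Paper.Digraph Finset Paper.Aux Paper.Aux2 Paper.Aux3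

variable {V V' : Type*}

/-- The possible two-way distances. -/
def T4 : Finset (ℕ × ℕ) := {(0,0), (1,1), (1,2), (2,1)}

lemma tdist_mem_T4 [Fintype V] [Nonempty V] {G : Digraph V} (hsc2 : G.IsSemicomplete)
    (hwdr : G.IsWDR) (x y : V) : G.tdist x y ∈ T4 := by
  rcases tdist_classify hsc2 hwdr x y with h | h | h | h <;> simp [T4, h]

lemma mem_T4_of_mem_tdSet [Fintype V] [Nonempty V] {G : Digraph V} (hsc2 : G.IsSemicomplete)
    (hwdr : G.IsWDR) {h : ℕ × ℕ} (hh : h ∈ G.tdSet) : h ∈ T4 := by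
  obtain ⟨x, y, rfl⟩ := hh
  exact tdist_mem_T4 hsc2 hwdr x y

lemma T4_sum_unique : ∀ a ∈ T4, ∀ b ∈ T4, ∀ c ∈ T4, ∀ d ∈ T4,
    a + b = c + d → (c = a ∧ d = b) ∨ (c = b ∧ d = a) := by decide

lemma p_zero_left {G : Digraph V} {h i j : ℕ × ℕ} (hi : i ∉ G.tdSet) : G.p h i j = 0 := by
  rw [Digraph.p]
  split
  · rename_i hh
    have he : G.P i j hh.choose.1 hh.choose.2 = ∅ := by
      ext z
      simp only [Digraph.P, Set.mem_setOf_eq, Set.mem_empty_iff_false, iff_false, not_and]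
      intro hz
      exact absurd ⟨_, z, hz⟩ hi
    rw [he]
    simp
  · rfl

lemma p_zero_right {G : Digraph V} {h i j : ℕ × ℕ} (hj : j ∉ G.tdSet) : G.p h i j = 0 := by
  rw [Digraph.p]
  split
  · rename_i hh
    have he : G.P i j hh.choose.1 hh.choose.2 = ∅ := by
      ext z
      simp only [Digraph.P, Set.mem_setOf_eq, Set.mem_empty_iff_false, iff_false, not_and]
      intro _ hz
      exact absurd ⟨z, _, hz⟩ hj
    rw [he]
    simp
  · rfl

/-- Index set for decomposing `P`-sets in the box product. -/
noncomputable def K (i j : ℕ × ℕ) : Finset ((ℕ × ℕ) × (ℕ × ℕ) × (ℕ × ℕ) × (ℕ × ℕ)) :=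
  (T4 ×ˢ T4 ×ˢ T4 ×ˢ T4).filter (fun w => w.1 + w.2.1 = i ∧ w.2.2.1 + w.2.2.2 = j)

lemma card_P_box [Fintype V] [Fintype V'] [Nonempty V] [Nonempty V']
    {Δ : Digraph V} {Δ' : Digraph V'}
    (hsc2 : Δ.IsSemicomplete) (hwdr : Δ.IsWDR) (hsc2' : Δ'.IsSemicomplete) (hwdr' : Δ'.IsWDR)
    (i j : ℕ × ℕ) (X Y : V × V') :
    Nat.card ((Δ.box Δ').P i j X Y) =
      ∑ w ∈ K i j,
        Nat.card (Δ.P w.1 w.2.2.1 X.1 Y.1) * Nat.card (Δ'.P w.2.1 w.2.2.2 X.2 Y.2) := by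
  classical
  have hsc := hwdr.1
  have hsc' := hwdr'.1
  have hbt : ∀ z : V × V', (Δ.box Δ').tdist X z = Δ.tdist X.1 z.1 + Δ'.tdist X.2 z.2 :=
    fun z => box_tdist hsc hsc' X.1 z.1 X.2 z.2
  have hbt' : ∀ z : V × V', (Δ.box Δ').tdist z Y = Δ.tdist z.1 Y.1 + Δ'.tdist z.2 Y.2 :=
    fun z => box_tdist hsc hsc' z.1 Y.1 z.2 Y.2
  have hP : (Δ.box Δ').P i j X Y
      = {z : V × V' | (Δ.box Δ').tdist X z = i ∧ (Δ.box Δ').tdist z Y = j} := rfl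
  rw [hP, nat_card_setOf]
  rw [Finset.card_eq_sum_card_fiberwise
    (f := fun z : V × V' =>
      (Δ.tdist X.1 z.1, Δ'.tdist X.2 z.2, Δ.tdist z.1 Y.1, Δ'.tdist z.2 Y.2))
    (t := K i j) ?_]
  · refine Finset.sum_congr rfl fun w hw => ?_
    obtain ⟨w1, w2, w3, w4⟩ := w
    obtain ⟨hwi, hwj⟩ : w1 + w2 = i ∧ w3 + w4 = j := (Finset.mem_filter.mp hw).2
    have hfib : Finset.filter
        (fun z : V × V' =>
          (Δ.tdist X.1 z.1, Δ'.tdist X.2 z.2, Δ.tdist z.1 Y.1, Δ'.tdist z.2 Y.2)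
            = (w1, w2, w3, w4))
        (Finset.univ.filter
          (fun z : V × V' => (Δ.box Δ').tdist X z = i ∧ (Δ.box Δ').tdist z Y = j))
        = (Finset.univ.filter (fun z1 => Δ.tdist X.1 z1 = w1 ∧ Δ.tdist z1 Y.1 = w3))
          ×ˢ (Finset.univ.filter (fun z2 => Δ'.tdist X.2 z2 = w2 ∧ Δ'.tdist z2 Y.2 = w4)) := by
      ext z
      simp only [Finset.mem_filter, Finset.mem_univ, true_and, Finset.mem_product,
        Prod.mk.injEq]
      constructor
      · rintro ⟨-, e1, e2, e3, e4⟩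
        exact ⟨⟨e1, e3⟩, e2, e4⟩
      · rintro ⟨⟨e1, e3⟩, e2, e4⟩
        refine ⟨⟨?_, ?_⟩, e1, e2, e3, e4⟩
        · rw [hbt z, e1, e2, hwi]
        · rw [hbt' z, e3, e4, hwj]
    rw [hfib, Finset.card_product]
    have c1 : Nat.card (Δ.P w1 w3 X.1 Y.1)
        = (Finset.univ.filter (fun z1 => Δ.tdist X.1 z1 = w1 ∧ Δ.tdist z1 Y.1 = w3)).card := by
      rw [show Δ.P w1 w3 X.1 Y.1
        = {z1 | Δ.tdist X.1 z1 = w1 ∧ Δ.tdist z1 Y.1 = w3} from rfl, nat_card_setOf]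
    have c2 : Nat.card (Δ'.P w2 w4 X.2 Y.2)
        = (Finset.univ.filter (fun z2 => Δ'.tdist X.2 z2 = w2 ∧ Δ'.tdist z2 Y.2 = w4)).card := by
      rw [show Δ'.P w2 w4 X.2 Y.2
        = {z2 | Δ'.tdist X.2 z2 = w2 ∧ Δ'.tdist z2 Y.2 = w4} from rfl, nat_card_setOf]
    rw [c1, c2]
  · intro z hz
    obtain ⟨hz1, hz2⟩ := Finset.mem_filter.mp hz |>.2
    rw [hbt z] at hz1
    rw [hbt' z] at hz2
    refine Finset.mem_filter.mpr ⟨?_, hz1, hz2⟩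
    refine Finset.mem_product.mpr ⟨tdist_mem_T4 hsc2 hwdr _ _, ?_⟩
    refine Finset.mem_product.mpr ⟨tdist_mem_T4 hsc2' hwdr' _ _, ?_⟩
    exact Finset.mem_product.mpr ⟨tdist_mem_T4 hsc2 hwdr _ _, tdist_mem_T4 hsc2' hwdr' _ _⟩

lemma term_swap {Δ : Digraph V} {Δ' : Digraph V'}
    (hsame : Δ.SameIntersectionNumbers Δ')
    {h1 h2 : ℕ × ℕ} (hm1 : h1 ∈ Δ.tdSet) (hm2 : h2 ∈ Δ.tdSet) (a b c d : ℕ × ℕ) :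
    Δ.p h1 c d * Δ'.p h2 a b = Δ.p h2 a b * Δ'.p h1 c d := by
  obtain ⟨hts, hp⟩ := hsame
  by_cases hc : c ∈ Δ.tdSet
  · by_cases hd : d ∈ Δ.tdSet
    · have e1 : Δ.p h1 c d = Δ'.p h1 c d := hp h1 c d hm1 hc hd
      by_cases ha : a ∈ Δ.tdSet
      · by_cases hb : b ∈ Δ.tdSet
        · have e2 : Δ.p h2 a b = Δ'.p h2 a b := hp h2 a b hm2 ha hb
          rw [e1, ← e2]; ring
        · have z1 : Δ'.p h2 a b = 0 := p_zero_right (hts ▸ hb)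
          have z2 : Δ.p h2 a b = 0 := p_zero_right hb
          rw [z1, z2]; ring
      · have z1 : Δ'.p h2 a b = 0 := p_zero_left (hts ▸ ha)
        have z2 : Δ.p h2 a b = 0 := p_zero_left ha
        rw [z1, z2]; ring
    · have z1 : Δ.p h1 c d = 0 := p_zero_right hd
      have z2 : Δ'.p h1 c d = 0 := p_zero_right (hts ▸ hd)
      rw [z1, z2]; ring
  · have z1 : Δ.p h1 c d = 0 := p_zero_left hc
    have z2 : Δ'.p h1 c d = 0 := p_zero_left (hts ▸ hc)
    rw [z1, z2]; ring

lemma sum_invariant [Fintype V] [Fintype V'] [Nonempty V] [Nonempty V']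
    {Δ : Digraph V} {Δ' : Digraph V'}
    (hsc2 : Δ.IsSemicomplete) (hwdr : Δ.IsWDR) (hsc2' : Δ'.IsSemicomplete) (hwdr' : Δ'.IsWDR)
    (hsame : Δ.SameIntersectionNumbers Δ')
    (i j : ℕ × ℕ) {h1 h2 h1' h2' : ℕ × ℕ}
    (m1 : h1 ∈ Δ.tdSet) (m2 : h2 ∈ Δ'.tdSet) (m1' : h1' ∈ Δ.tdSet) (m2' : h2' ∈ Δ'.tdSet)
    (hsum : h1 + h2 = h1' + h2') :
    ∑ w ∈ K i j, Δ.p h1 w.1 w.2.2.1 * Δ'.p h2 w.2.1 w.2.2.2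
      = ∑ w ∈ K i j, Δ.p h1' w.1 w.2.2.1 * Δ'.p h2' w.2.1 w.2.2.2 := by
  have t1 : h1 ∈ T4 := mem_T4_of_mem_tdSet hsc2 hwdr m1
  have t2 : h2 ∈ T4 := mem_T4_of_mem_tdSet hsc2' hwdr' m2
  have t1' : h1' ∈ T4 := mem_T4_of_mem_tdSet hsc2 hwdr m1'
  have t2' : h2' ∈ T4 := mem_T4_of_mem_tdSet hsc2' hwdr' m2'
  rcases T4_sum_unique h1 t1 h2 t2 h1' t1' h2' t2' hsum with ⟨rfl, rfl⟩ | ⟨e1, e2⟩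
  · rfl
  · rw [e1, e2]
    have hm2 : h2 ∈ Δ.tdSet := by rw [← e1]; exact m1'
    -- now goal: ∑ p h1 .. * p' h2 .. = ∑ p h2 .. * p' h1 ..
    have hKmem : ∀ w ∈ K i j, ((w.2.1, w.1, w.2.2.2, w.2.2.1) :
        (ℕ × ℕ) × (ℕ × ℕ) × (ℕ × ℕ) × (ℕ × ℕ)) ∈ K i j := by
      rintro ⟨a, b, c, d⟩ hw
      have h0 := Finset.mem_filter.mp hw
      have hA := Finset.mem_product.mp h0.1
      have hB := Finset.mem_product.mp hA.2
      have hC := Finset.mem_product.mp hB.2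
      refine Finset.mem_filter.mpr ⟨?_, ?_, ?_⟩
      · exact Finset.mem_product.mpr ⟨hB.1,
          Finset.mem_product.mpr ⟨hA.1, Finset.mem_product.mpr ⟨hC.2, hC.1⟩⟩⟩
      · rw [add_comm]; exact h0.2.1
      · rw [add_comm]; exact h0.2.2
    rw [Finset.sum_nbij' (i := fun w => (w.2.1, w.1, w.2.2.2, w.2.2.1))
      (j := fun w => (w.2.1, w.1, w.2.2.2, w.2.2.1)) hKmem hKmem
      (fun a _ => rfl) (fun a _ => rfl)
      (fun w hw => ?_)]
    exact term_swap hsame m1 hm2 w.2.1 w.2.2.2 w.1 w.2.2.1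

lemma hm2_aux : True := trivial

end Aux4
end Paper

namespace Paper
namespace Aux5

open Paper Paper.Digraph Finset Paper.Aux Paper.Aux2 Paper.Aux3 Paper.Aux4

variable {V V' : Type*}

lemma card_P_box_eq [Fintype V] [Fintype V'] [Nonempty V] [Nonempty V']
    {Δ : Digraph V} {Δ' : Digraph V'}
    (hsc2 : Δ.IsSemicomplete) (hwdr : Δ.IsWDR) (hsc2' : Δ'.IsSemicomplete) (hwdr' : Δ'.IsWDR)
    (hsame : Δ.SameIntersectionNumbers Δ')
    (i j : ℕ × ℕ) (X Y X' Y' : V × V')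
    (hXY : (Δ.box Δ').tdist X Y = (Δ.box Δ').tdist X' Y') :
    Nat.card ((Δ.box Δ').P i j X Y) = Nat.card ((Δ.box Δ').P i j X' Y') := by
  have hsc := hwdr.1
  have hsc' := hwdr'.1
  have hsum : Δ.tdist X.1 Y.1 + Δ'.tdist X.2 Y.2
      = Δ.tdist X'.1 Y'.1 + Δ'.tdist X'.2 Y'.2 := by
    rw [← box_tdist hsc hsc' X.1 Y.1 X.2 Y.2, ← box_tdist hsc hsc' X'.1 Y'.1 X'.2 Y'.2]
    exact hXY
  rw [card_P_box hsc2 hwdr hsc2' hwdr' i j X Y, card_P_box hsc2 hwdr hsc2' hwdr' i j X' Y']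
  have hL : ∀ w ∈ K i j,
      Nat.card (Δ.P w.1 w.2.2.1 X.1 Y.1) * Nat.card (Δ'.P w.2.1 w.2.2.2 X.2 Y.2)
        = Δ.p (Δ.tdist X.1 Y.1) w.1 w.2.2.1 * Δ'.p (Δ'.tdist X.2 Y.2) w.2.1 w.2.2.2 := by
    intro w _
    rw [hwdr.2 w.1 w.2.2.1 X.1 Y.1, hwdr'.2 w.2.1 w.2.2.2 X.2 Y.2]
  have hR : ∀ w ∈ K i j,
      Nat.card (Δ.P w.1 w.2.2.1 X'.1 Y'.1) * Nat.card (Δ'.P w.2.1 w.2.2.2 X'.2 Y'.2)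
        = Δ.p (Δ.tdist X'.1 Y'.1) w.1 w.2.2.1 * Δ'.p (Δ'.tdist X'.2 Y'.2) w.2.1 w.2.2.2 := by
    intro w _
    rw [hwdr.2 w.1 w.2.2.1 X'.1 Y'.1, hwdr'.2 w.2.1 w.2.2.2 X'.2 Y'.2]
  rw [Finset.sum_congr rfl hL, Finset.sum_congr rfl hR]
  exact sum_invariant hsc2 hwdr hsc2' hwdr' hsame i j
    ⟨X.1, Y.1, rfl⟩ ⟨X.2, Y.2, rfl⟩ ⟨X'.1, Y'.1, rfl⟩ ⟨X'.2, Y'.2, rfl⟩ hsum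

end Aux5
end Paper

open Paper in
/-- **Proposition 4.1.** The Cartesian product of two semicomplete weakly
distance-regular digraphs of girth `2` with the same intersection numbers is
weakly distance-regular. -/
theorem prop_box_wdr {V V' : Type*} [Finite V] [Nonempty V] [Finite V'] [Nonempty V']
    (Δ : Paper.Digraph V) (Δ' : Paper.Digraph V')
    (hsc : Δ.IsSemicomplete) (hwdr : Δ.IsWDR) (hg : Δ.girth = 2)
    (hsc' : Δ'.IsSemicomplete) (hwdr' : Δ'.IsWDR) (hg' : Δ'.girth = 2)
    (hsame : Δ.SameIntersectionNumbers Δ') :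
    (Δ.box Δ').IsWDR := by
  classical
  have : Fintype V := Fintype.ofFinite V
  have : Fintype V' := Fintype.ofFinite V'
  have hsc1 := hwdr.1
  have hsc1' := hwdr'.1
  refine ⟨Paper.Aux3.box_sc hsc1 hsc1', ?_⟩
  intro i j X Y
  have hex : ∃ xy : (V × V') × (V × V'),
      (Δ.box Δ').tdist xy.1 xy.2 = (Δ.box Δ').tdist X Y := ⟨(X, Y), rfl⟩
  rw [Digraph.p, dif_pos hex]
  exact Paper.Aux5.card_P_box_eq hsc hwdr hsc' hwdr' hsame i j X Y
    hex.choose.1 hex.choose.2 hex.choose_spec.symm
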